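/- Let Δ be a compact convex set in ℝⁿ written as the union of two closed n-dimensional simplices Σ₋ and Σ₊ such that Σ₋ ∩ Σ₊ = F is a common (n-1)-dimensional face of both. Then the vertex set of Δ (its extreme points) is contained in the union of the vertex sets of Σ₋ and Σ₊, and every vertex of Σ₋ or Σ₊ not lying in F is an extreme point of Δ; in particular Δ has at most n+2 extreme points. -/

import Mathlib

open Set

/-- A point uniquely maximizing an affine functional on `S` is an extreme point of `S`. -/
lemma extreme_of_affine_max {n : ℕ} (f : (Fin n → ℝ) →ᵃ[ℝ] ℝ) (S : Set (Fin n → ℝ))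
    (x : Fin n → ℝ) (hxS : x ∈ S) (hle : ∀ y ∈ S, f y ≤ f x)
    (heq : ∀ y ∈ S, f y = f x → y = x) : x ∈ S.extremePoints ℝ := by
  refine ⟨hxS, fun x₁ h₁ x₂ h₂ hseg => ?_⟩
  obtain ⟨u, v, hu, hv, huv, hx⟩ := hseg
  have hcombo : f (u • x₁ + v • x₂) = u • f x₁ + v • f x₂ := Convex.combo_affine_apply huv
  rw [hx] at hcombo
  simp only [smul_eq_mul] at hcombo
  have hsplit : u * f x + v * f x = f x := by rw [← add_mul, huv, one_mul]
  have h1 : f x₁ = f x := le_antisymm (hle x₁ h₁) <| le_of_mul_le_mul_left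
    (by linarith [mul_le_mul_of_nonneg_left (hle x₂ h₂) hv.le]) hu
  have h2 : f x₂ = f x := le_antisymm (hle x₂ h₂) <| le_of_mul_le_mul_left
    (by linarith [mul_le_mul_of_nonneg_left (hle x₁ h₁) hu.le]) hv
  exact heq x₁ h₁ h1

/-- Key lemma: if `P ∩ Q` is exactly the facet of the simplex `P` opposite to the vertex
`p a`, and `Q` is convex, then `p a` is an extreme point of `P ∪ Q`. -/
lemma aux_extreme {n : ℕ} (p : Fin (n + 1) → (Fin n → ℝ)) (hp : AffineIndependent ℝ p)
    (a : Fin (n + 1)) (Q : Set (Fin n → ℝ)) (hQ : Convex ℝ Q)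
    (hF : convexHull ℝ (Set.range p) ∩ Q = convexHull ℝ (p '' {i | i ≠ a})) :
    p a ∈ (convexHull ℝ (Set.range p) ∪ Q).extremePoints ℝ := by
  rcases Nat.eq_zero_or_pos n with hn | hn
  · subst hn
    have : Unique (Fin 0 → ℝ) := Pi.uniqueOfIsEmpty _
    exact ⟨Or.inl (subset_convexHull ℝ _ (mem_range_self a)),
      fun x₁ _ x₂ _ _ => Subsingleton.elim _ _⟩
  have hnR : (0:ℝ) < n := by exact_mod_cast hn
  have hspan : affineSpan ℝ (Set.range p) = ⊤ :=
    hp.affineSpan_eq_top_iff_card_eq_finrank_add_one.mpr (by simp)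
  let B : AffineBasis (Fin (n + 1)) ℝ (Fin n → ℝ) := ⟨p, hp, hspan⟩
  have hBp : ⇑B = p := rfl
  have hhull : convexHull ℝ (Set.range p) = { x | ∀ i, 0 ≤ B.coord i x } := by
    rw [← hBp]; exact B.convexHull_eq_nonneg_coord
  -- the facet lies in the zero set of coordinate `a`
  have hF0 : ∀ x ∈ convexHull ℝ (p '' {i | i ≠ a}), B.coord a x = 0 := by
    intro x hx
    have hsub : convexHull ℝ (p '' {i | i ≠ a}) ⊆ (B.coord a) ⁻¹' {0} := by
      apply convexHull_min
      · rintro _ ⟨i, hi, rfl⟩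
        have h := B.coord_apply a i
        rw [hBp] at h
        simp only [Set.mem_preimage, Set.mem_singleton_iff, h]
        simp [(Ne.symm hi : ¬ a = i)]
      · exact (convex_singleton (0:ℝ)).affine_preimage (B.coord a)
    exact hsub hx
  -- the centroid of the facet
  set c : Fin n → ℝ := ({a}ᶜ : Finset (Fin (n + 1))).centroid ℝ p with hc
  have hcard : ({a}ᶜ : Finset (Fin (n + 1))).card = n := by
    simp [Finset.card_compl]
  have hne : ({a}ᶜ : Finset (Fin (n + 1))).Nonempty := by
    rw [← Finset.card_pos, hcard]; exact hn
  have hcF : c ∈ convexHull ℝ (p '' {i | i ≠ a}) := by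
    rw [hc, Finset.centroid_eq_centerMass _ hne]
    apply Finset.centerMass_mem_convexHull
    · intro i _; rw [Finset.centroidWeights_apply]; positivity
    · rw [Finset.sum_centroidWeights_eq_one_of_nonempty ℝ _ hne]; norm_num
    · intro i hi
      exact ⟨i, by simpa using hi, rfl⟩
  have hcQ : c ∈ Q := by
    have h : c ∈ convexHull ℝ (Set.range p) ∩ Q := hF ▸ hcF
    exact h.2
  have hccoord : ∀ i, i ≠ a → B.coord i c = (n : ℝ)⁻¹ := by
    intro i hi
    have h := B.coord_apply_centroid (s := ({a}ᶜ : Finset (Fin (n + 1)))) (i := i)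
      (by simpa using hi)
    rw [hBp] at h
    rw [hc, h, hcard]
  have hca : B.coord a c = 0 := hF0 c hcF
  -- key inequality : coord a ≤ 0 on Q
  have key : ∀ x ∈ Q, B.coord a x ≤ 0 := by
    by_contra hcon
    push_neg at hcon
    obtain ⟨x, hxQ, hx⟩ := hcon
    set ε : ℝ := (n : ℝ)⁻¹ with hε
    have hεpos : 0 < ε := by positivity
    set C : ℝ := ∑ i, |B.coord i x| with hC
    have hC0 : 0 ≤ C := Finset.sum_nonneg fun i _ => abs_nonneg _
    have hεC : 0 < ε + C := by linarith
    set t : ℝ := ε / (ε + C) with ht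
    have htpos : 0 < t := div_pos hεpos hεC
    have htle : t ≤ 1 := by
      rw [ht, div_le_one hεC]; linarith
    have htmul : t * (ε + C) = ε := div_mul_cancel₀ _ (ne_of_gt hεC)
    set z : Fin n → ℝ := (1 - t) • c + t • x with hz
    have hzQ : z ∈ Q := hQ hcQ hxQ (by linarith) (le_of_lt htpos) (by ring)
    have hzcoord : ∀ i, B.coord i z = (1 - t) * B.coord i c + t * B.coord i x := by
      intro i
      have := Convex.combo_affine_apply (x := c) (y := x) (f := B.coord i)
        (a := 1 - t) (b := t) (by ring)
      rw [hz, this]; simp [smul_eq_mul]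
    have hzP : z ∈ convexHull ℝ (Set.range p) := by
      rw [hhull]
      intro i
      rw [hzcoord i]
      by_cases hia : i = a
      · rw [hia, hca]
        nlinarith [mul_pos htpos hx]
      · rw [hccoord i hia]
        have habs : |B.coord i x| ≤ C := by
          rw [hC]
          exact Finset.single_le_sum (f := fun j => |B.coord j x|) (fun j _ => abs_nonneg _) (Finset.mem_univ i)
        have hnegabs : -|B.coord i x| ≤ B.coord i x := neg_abs_le _
        nlinarith
    have hzF : z ∈ convexHull ℝ (p '' {i | i ≠ a}) := hF ▸ ⟨hzP, hzQ⟩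
    have : B.coord a z = 0 := hF0 z hzF
    rw [hzcoord a, hca] at this
    nlinarith
  -- conclude via the maximum principle for coordinate `a`
  apply extreme_of_affine_max (B.coord a)
  · exact Or.inl (subset_convexHull ℝ _ (mem_range_self a))
  · intro y hy
    have hpa : B.coord a (p a) = 1 := by
      have h := B.coord_apply a a; rw [hBp] at h; simpa using h
    rw [hpa]
    rcases hy with hyP | hyQ
    · rw [hhull] at hyP
      have hsum : ∑ i, B.coord i y = 1 := B.sum_coord_apply_eq_one y
      calc B.coord a y ≤ ∑ i, B.coord i y :=
            Finset.single_le_sum (fun i _ => hyP i) (Finset.mem_univ a)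
        _ = 1 := hsum
    · linarith [key y hyQ]
  · intro y hy h1
    have hpa : B.coord a (p a) = 1 := by
      have h := B.coord_apply a a; rw [hBp] at h; simpa using h
    rw [hpa] at h1
    rcases hy with hyP | hyQ
    · rw [hhull] at hyP
      have hsum : ∑ i, B.coord i y = 1 := B.sum_coord_apply_eq_one y
      have hrest : ∑ i ∈ ({a}ᶜ : Finset (Fin (n+1))), B.coord i y = 0 := by
        have := Finset.sum_compl_add_sum ({a} : Finset (Fin (n+1))) (fun i => B.coord i y)
        simp only [Finset.sum_singleton] at this
        rw [hsum] at this
        linarith [this, h1]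
      have hz : ∀ i ∈ ({a}ᶜ : Finset (Fin (n+1))), B.coord i y = 0 :=
        (Finset.sum_eq_zero_iff_of_nonneg (fun i _ => hyP i)).mp hrest
      apply B.ext_elem
      intro i
      have hcoordpa : B.coord i (p a) = if i = a then 1 else 0 := by
        have h := B.coord_apply i a; rw [hBp] at h; exact h
      by_cases hia : i = a
      · subst hia; rw [hcoordpa, h1]; simp
      · rw [hcoordpa, hz i (by simpa using hia)]; simp [hia]
    · linarith [key y hyQ]

/-- Each vertex of a simplex is an extreme point of the simplex. -/
lemma vertex_extreme {n : ℕ} (p : Fin (n + 1) → (Fin n → ℝ)) (hp : AffineIndependent ℝ p)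
    (a : Fin (n + 1)) : p a ∈ (convexHull ℝ (Set.range p)).extremePoints ℝ := by
  have h := aux_extreme p hp a (convexHull ℝ (p '' {i | i ≠ a})) (convex_convexHull ℝ _)
    (Set.inter_eq_self_of_subset_right (convexHull_mono (Set.image_subset_range _ _)))
  rwa [Set.union_eq_self_of_subset_right (convexHull_mono (Set.image_subset_range _ _))] at h

/-- if Δ is the union of two closed n-simplices meeting exactly in a
common (n-1)-dimensional face F, then the extreme points of Δ lie among the vertices of
the two simplices, every vertex not in F is an extreme point of Δ, and Δ has at most
n + 2 extreme points. -/
theorem stmt_11 {n : ℕ} (p q : Fin (n + 1) → (Fin n → ℝ))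
    (hp : AffineIndependent ℝ p) (hq : AffineIndependent ℝ q)
    (a b : Fin (n + 1)) (F Δ : Set (Fin n → ℝ))
    (hΔ : Δ = convexHull ℝ (Set.range p) ∪ convexHull ℝ (Set.range q))
    (hF : convexHull ℝ (Set.range p) ∩ convexHull ℝ (Set.range q) = F)
    (hFp : F = convexHull ℝ (p '' {i | i ≠ a}))
    (hFq : F = convexHull ℝ (q '' {j | j ≠ b})) :
    Set.extremePoints ℝ Δ ⊆ Set.range p ∪ Set.range q ∧
    (∀ y ∈ Set.range p ∪ Set.range q, y ∉ F → y ∈ Set.extremePoints ℝ Δ) ∧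
    (Set.extremePoints ℝ Δ).ncard ≤ n + 2 := by
  subst hΔ
  set P := convexHull ℝ (Set.range p) with hP
  set Q := convexHull ℝ (Set.range q) with hQ
  -- Part 1
  have part1 : Set.extremePoints ℝ (P ∪ Q) ⊆ Set.range p ∪ Set.range q := by
    intro x hx
    rcases hx.1 with hxP | hxQ
    · exact Or.inl (extremePoints_convexHull_subset
        ⟨hxP, fun x₁ h₁ x₂ h₂ hs => hx.2 (Or.inl h₁) (Or.inl h₂) hs⟩)
    · exact Or.inr (extremePoints_convexHull_subset
        ⟨hxQ, fun x₁ h₁ x₂ h₂ hs => hx.2 (Or.inr h₁) (Or.inr h₂) hs⟩)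
  -- Part 2
  have part2 : ∀ y ∈ Set.range p ∪ Set.range q, y ∉ F →
      y ∈ Set.extremePoints ℝ (P ∪ Q) := by
    rintro y (⟨i, rfl⟩ | ⟨j, rfl⟩) hyF
    · have hia : i = a := by
        by_contra hia
        exact hyF (hFp ▸ subset_convexHull ℝ _ ⟨i, hia, rfl⟩)
      subst hia
      exact aux_extreme p hp i Q (convex_convexHull ℝ _) (hF.trans hFp)
    · have hjb : j = b := by
        by_contra hjb
        exact hyF (hFq ▸ subset_convexHull ℝ _ ⟨j, hjb, rfl⟩)
      subst hjb
      have h := aux_extreme q hq j P (convex_convexHull ℝ _)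
        (((Set.inter_comm Q P).trans hF).trans hFq)
      rwa [Set.union_comm] at h
  refine ⟨part1, part2, ?_⟩
  -- Part 3
  have hqsub : Set.range q ⊆ insert (q b) (Set.range p) := by
    rintro _ ⟨j, rfl⟩
    by_cases hjb : j = b
    · subst hjb; exact Set.mem_insert _ _
    · right
      have hqjF : q j ∈ F := hFq ▸ subset_convexHull ℝ _ ⟨j, hjb, rfl⟩
      have hFQ : F ⊆ Q := by rw [← hF]; exact Set.inter_subset_right
      have hext : q j ∈ (convexHull ℝ (p '' {i | i ≠ a})).extremePoints ℝ := by
        have hv := vertex_extreme q hq j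
        rw [← hFp]
        exact ⟨hqjF, fun x₁ h₁ x₂ h₂ hs =>
          hv.2 (hFQ h₁) (hFQ h₂) hs⟩
      have := extremePoints_convexHull_subset hext
      exact Set.image_subset_range _ _ this
  have hsub2 : Set.extremePoints ℝ (P ∪ Q) ⊆ insert (q b) (Set.range p) := by
    intro x hx
    rcases part1 hx with h | h
    · exact Set.mem_insert_of_mem _ h
    · exact hqsub h
  have hfin : (insert (q b) (Set.range p)).Finite := (Set.finite_range p).insert _
  have hcard : (Set.range p).ncard ≤ n + 1 := by
    have : Set.range p = ↑(Finset.univ.image p) := by simp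
    rw [this, Set.ncard_coe_finset]
    calc (Finset.univ.image p).card ≤ Finset.univ.card := Finset.card_image_le
      _ = n + 1 := by simp
  calc (Set.extremePoints ℝ (P ∪ Q)).ncard ≤ (insert (q b) (Set.range p)).ncard :=
        Set.ncard_le_ncard hsub2 hfin
    _ ≤ (Set.range p).ncard + 1 := Set.ncard_insert_le _ _
    _ ≤ n + 2 := by omega
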